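/- Let G = (V,E) be a graph with activation costs c_e^u, c_e^v ≥ 0 for each edge e = uv, and suppose c_e^s = 0 and c_e^t = 0 for every edge incident to s or t respectively. If F* is an edge set forming two internally disjoint s–t paths P₁, P₂, then min(ℓ_{P₁}(V), ℓ_{P₂}(V)) ≤ (1/2)·ℓ_{F*}(V), where ℓ_F(v) = max_{e ∈ δ_F(v)} c_e^v and ℓ_F(V) = Σ_{v∈V} ℓ_F(v). -/

import Mathlib

open SimpleGraph

def TwoDisjointPaths {V : Type*} (G : SimpleGraph V) (s t : V) : Prop :=
  ∃ p q : G.Walk s t, p.IsPath ∧ q.IsPath ∧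
    ∀ v, v ∈ p.support → v ∈ q.support → v = s ∨ v = t

open Classical in
/-- `ℓ_F(v) = max { c_e^v : e ∈ δ_F(v) }`, the activation cost incurred by `F` at `v`
(`0` if no edge of `F` is incident to `v`). -/
noncomputable def ell {V : Type*} (c : Sym2 V → V → NNReal) (F : Finset (Sym2 V)) (v : V) :
    NNReal :=
  (F.filter (fun e => v ∈ e)).sup (fun e => c e v)

lemma ell_union {V : Type*} [DecidableEq V] (c : Sym2 V → V → NNReal)
    (F F' : Finset (Sym2 V)) (v : V) :
    ell c (F ∪ F') v = ell c F v ⊔ ell c F' v := by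
  simp [ell, Finset.filter_union, Finset.sup_union]

lemma mem_support_of_ell_ne_zero {V : Type*} [DecidableEq V] {G : SimpleGraph V} {s t : V}
    (c : Sym2 V → V → NNReal) (p : G.Walk s t) {v : V}
    (h : ell c p.edges.toFinset v ≠ 0) : v ∈ p.support := by
  by_contra hv
  apply h
  rw [ell]
  apply le_antisymm _ zero_le
  apply Finset.sup_le
  intro e he
  exfalso
  simp only [Finset.mem_filter, List.mem_toFinset] at he
  obtain ⟨he1, he2⟩ := he
  apply hv
  induction e with
  | h x y =>
    rcases Sym2.mem_iff.mp he2 with rfl | rfl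
    · exact p.fst_mem_support_of_mem_edges he1
    · exact p.snd_mem_support_of_mem_edges he1

lemma ell_end_zero {V : Type*} [DecidableEq V] {G : SimpleGraph V} {s t w : V}
    (c : Sym2 V → V → NNReal) (p : G.Walk s t)
    (hw : ∀ e ∈ G.edgeSet, w ∈ e → c e w = 0) :
    ell c p.edges.toFinset w = 0 := by
  rw [ell]
  apply le_antisymm _ zero_le
  apply Finset.sup_le
  intro e he
  simp only [Finset.mem_filter, List.mem_toFinset] at he
  exact le_of_eq (hw e (p.edges_subset_edgeSet he.1) he.2)

/-- If the activation costs at `s` and `t` are zero and `F* = P₁ ∪ P₂` is a union of two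
internally disjoint `s`-`t` paths, then the cheaper path has activation cost at most
half of `ℓ_{F*}(V)`. -/
theorem stmt2 {V : Type*} [Fintype V] [DecidableEq V] (G : SimpleGraph V) (s t : V)
    (hst : s ≠ t) (c : Sym2 V → V → NNReal)
    (hs : ∀ e ∈ G.edgeSet, s ∈ e → c e s = 0) (ht : ∀ e ∈ G.edgeSet, t ∈ e → c e t = 0)
    (p q : G.Walk s t) (hp : p.IsPath) (hq : q.IsPath)
    (hdisj : ∀ v, v ∈ p.support → v ∈ q.support → v = s ∨ v = t) :
    min (∑ v, ell c p.edges.toFinset v) (∑ v, ell c q.edges.toFinset v)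
      ≤ (1 / 2) * ∑ v, ell c (p.edges.toFinset ∪ q.edges.toFinset) v := by
  set A := ∑ v, ell c p.edges.toFinset v
  set B := ∑ v, ell c q.edges.toFinset v
  set S := ∑ v, ell c (p.edges.toFinset ∪ q.edges.toFinset) v
  have key : A + B ≤ S := by
    rw [← Finset.sum_add_distrib]
    apply Finset.sum_le_sum
    intro v _
    rw [ell_union]
    by_cases hvp : ell c p.edges.toFinset v = 0
    · rw [hvp, zero_add]; exact le_max_right _ _
    · by_cases hvq : ell c q.edges.toFinset v = 0
      · rw [hvq, add_zero]; exact le_max_left _ _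
      · exfalso
        have hvs := hdisj v (mem_support_of_ell_ne_zero c p hvp)
          (mem_support_of_ell_ne_zero c q hvq)
        rcases hvs with rfl | rfl
        · exact hvp (ell_end_zero c p hs)
        · exact hvq (ell_end_zero c q ht)
  have h2 : min A B + min A B ≤ S :=
    le_trans (add_le_add (min_le_left A B) (min_le_right A B)) key
  have : 2 * min A B ≤ S := by rwa [two_mul]
  calc min A B = (1/2) * (2 * min A B) := by
        rw [← mul_assoc]
        norm_num
    _ ≤ (1/2) * S := by
        exact mul_le_mul_right this _
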